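/- Let G be a commutative group (written multiplicatively) and F : ℤ × ℤ → G a function such that (i) F(a,b) = F(b,a) for all a,b; (ii) F(a,b) · F(−a,−b) = 1 for all a,b; (iii) F(a,b) · F(−a, 1−b) = F(0,1) for all a,b. Then F(a,b) = F(0,1)^{a+b} for all integers a, b. -/

import Mathlib

/-- If `F : ℤ × ℤ → G` (with `G` a commutative group) is symmetric, satisfies
`F(a,b)·F(-a,-b) = 1` and `F(a,b)·F(-a,1-b) = F(0,1)`, then `F(a,b) = F(0,1)^(a+b)`. -/
theorem stmt_8 (G : Type*) [CommGroup G] (F : ℤ × ℤ → G)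
    (h1 : ∀ a b : ℤ, F (a, b) = F (b, a))
    (h2 : ∀ a b : ℤ, F (a, b) * F (-a, -b) = 1)
    (h3 : ∀ a b : ℤ, F (a, b) * F (-a, 1 - b) = F (0, 1)) :
    ∀ a b : ℤ, F (a, b) = F (0, 1) ^ (a + b) := by
  set c := F (0, 1) with hc
  -- recursion: F(a,b) = c * F(a, b-1)
  have hrec : ∀ a b : ℤ, F (a, b) = c * F (a, b - 1) := by
    intro a b
    have e2 := h2 a (b - 1)
    have e3 := h3 a b
    have : F (-a, 1 - b) = (F (a, b - 1))⁻¹ := by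
      rw [eq_inv_iff_mul_eq_one]
      have : (1 - b : ℤ) = -(b - 1) := by ring
      rw [this]
      rw [mul_comm]; exact e2
    rw [this] at e3
    group at e3 ⊢
    rw [← e3]; group
  have h00 : F (0, 0) = 1 := by
    have e : c = c * F (0, 0) := by have := hrec 0 1; simp only [sub_self] at this; exact this
    exact mul_eq_left.mp e.symm
  have hb : ∀ a b : ℤ, F (a, b) = c ^ b * F (a, 0) := by
    intro a b
    induction b using Int.induction_on with
    | zero => simp
    | succ k ih =>
      rw [hrec a (k + 1)]
      simp only [add_sub_cancel_right] at *
      rw [ih, zpow_add_one]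
      simp [mul_comm, mul_assoc, mul_left_comm]
    | pred k ih =>
      have := hrec a (-k)
      rw [ih] at this
      have h' : F (a, -k - 1) = c⁻¹ * (c ^ (-k : ℤ) * F (a, 0)) := by
        rw [eq_inv_mul_iff_mul_eq, ← this]
      rw [h', zpow_sub, zpow_one]
      group
  intro a b
  rw [hb a b, h1 a 0, hb 0 a, h00, mul_one, zpow_add, mul_comm]
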